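/- arXiv:1907.04520 — 5 statements merged into one kernel-verified Lean document; each statement's English description precedes it below -/
import Mathlib

section
/- Let σ > 0, α > 0, and define u(x) = exp(-(|x|²)/(2σ²) - 1/(2σ²) - N/(2α)) for x ∈ ℝ^N. Then u is a C² function with values in (0,1], and it is a subsolution of the semilinear equation, i.e., -Δu(x) + (1/σ⁴)|x|²u(x) ≤ -(2α/σ²) u(x) ln u(x) for all x ∈ ℝ^N. -/
open RealInnerProductSpace

noncomputable def laplacian {N : ℕ} (f : EuclideanSpace ℝ (Fin N) → ℝ)
    (x : EuclideanSpace ℝ (Fin N)) : ℝ :=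
  ∑ i : Fin N, fderiv ℝ (fun y => fderiv ℝ f y (EuclideanSpace.single i 1)) x
      (EuclideanSpace.single i 1)

lemma aux_hasFDerivAt (N : ℕ) (a b : ℝ) (x : EuclideanSpace ℝ (Fin N)) :
    HasFDerivAt (fun y : EuclideanSpace ℝ (Fin N) => Real.exp (a * ⟪y, y⟫ + b))
      ((Real.exp (a * ⟪x, x⟫ + b) * (2*a)) • innerSL ℝ x) x := by
  have h0 : HasFDerivAt (fun y : EuclideanSpace ℝ (Fin N) => a * ⟪y, y⟫ + b)
      ((2*a) • innerSL ℝ x) x := by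
    have h := ((hasFDerivAt_id x).inner ℝ (hasFDerivAt_id x)).const_mul a |>.add_const b
    refine h.congr_fderiv ?_
    ext v
    simp only [ContinuousLinearMap.smul_apply, ContinuousLinearMap.coe_comp',
      Function.comp_apply, ContinuousLinearMap.prod_apply, ContinuousLinearMap.id_apply,
      fderivInnerCLM_apply, innerSL_apply_apply, smul_eq_mul, id]
    rw [real_inner_comm v x]
    ring
  have h1 := h0.exp
  refine h1.congr_fderiv ?_
  ext v
  simp only [ContinuousLinearMap.smul_apply, innerSL_apply_apply, smul_eq_mul]
  ring

lemma aux_laplacian (N : ℕ) (a b : ℝ) (u : EuclideanSpace ℝ (Fin N) → ℝ)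
    (hu' : u = fun y : EuclideanSpace ℝ (Fin N) => Real.exp (a * ⟪y, y⟫ + b))
    (x : EuclideanSpace ℝ (Fin N)) :
    laplacian u x = u x * ((2*a)^2 * ⟪x, x⟫ + N * (2*a)) := by
  have key : ∀ y : EuclideanSpace ℝ (Fin N),
      HasFDerivAt u ((u y * (2*a)) • innerSL ℝ y) y := by
    intro y; rw [hu']; exact aux_hasFDerivAt N a b y
  have hfd : ∀ i : Fin N, (fun y => fderiv ℝ u y (EuclideanSpace.single i 1))
      = fun y => (u y * (2*a)) * y i := by
    intro i; funext y
    rw [(key y).fderiv]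
    simp [EuclideanSpace.inner_single_right]
  unfold laplacian
  have hterm : ∀ i : Fin N,
      fderiv ℝ (fun y => fderiv ℝ u y (EuclideanSpace.single i 1)) x
        (EuclideanSpace.single i 1)
      = u x * ((2*a)^2 * (x i * x i) + (2*a)) := by
    intro i
    rw [hfd i]
    have hproj : HasFDerivAt (fun y : EuclideanSpace ℝ (Fin N) => y i)
        ((PiLp.proj (𝕜 := ℝ) 2 (fun _ : Fin N => ℝ) i :
          EuclideanSpace ℝ (Fin N) →L[ℝ] ℝ)) x :=
      (PiLp.proj (𝕜 := ℝ) 2 (fun _ : Fin N => ℝ) i :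
          EuclideanSpace ℝ (Fin N) →L[ℝ] ℝ).hasFDerivAt
    have hmul := ((key x).mul_const (2*a)).mul hproj
    rw [(show HasFDerivAt (fun y : EuclideanSpace ℝ (Fin N) => u y * (2*a) * y i) _ x from hmul).fderiv]
    simp [EuclideanSpace.inner_single_right, PiLp.proj_apply]
    ring
  rw [Finset.sum_congr rfl (fun i _ => hterm i)]
  have hxx : ⟪x, x⟫ = ∑ i, x i * x i := by
    rw [PiLp.inner_apply]; simp [sq]
  rw [hxx]
  simp only [mul_add, Finset.sum_add_distrib, ← Finset.mul_sum, Finset.sum_const,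
    Finset.card_univ, Fintype.card_fin, nsmul_eq_mul]
  ring

theorem stmt1 (N : ℕ) (hN : 1 ≤ N) (σ α : ℝ) (hσ : 0 < σ) (hα : 0 < α)
    (u : EuclideanSpace ℝ (Fin N) → ℝ)
    (hu : ∀ x, u x = Real.exp (-‖x‖ ^ 2 / (2 * σ ^ 2) - 1 / (2 * σ ^ 2) - N / (2 * α))) :
    ContDiff ℝ 2 u ∧ (∀ x, 0 < u x ∧ u x ≤ 1) ∧
      ∀ x, -laplacian u x + (1 / σ ^ 4) * ‖x‖ ^ 2 * u x
          ≤ -(2 * α / σ ^ 2) * u x * Real.log (u x) := by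
  have hσ2 : (0:ℝ) < σ ^ 2 := by positivity
  set a : ℝ := -(1/(2*σ^2)) with ha
  set b : ℝ := -(1/(2*σ^2)) - N/(2*α) with hb
  have hu' : u = fun y : EuclideanSpace ℝ (Fin N) => Real.exp (a * ⟪y, y⟫ + b) := by
    funext y
    rw [hu y, real_inner_self_eq_norm_sq]
    congr 1
    rw [ha, hb]
    ring
  refine ⟨?_, ?_, ?_⟩
  · rw [hu']
    exact Real.contDiff_exp.comp
      ((contDiff_const.mul (contDiff_id.inner ℝ contDiff_id)).add contDiff_const)
  · intro x
    refine ⟨by rw [hu]; exact Real.exp_pos _, ?_⟩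
    rw [hu, Real.exp_le_one_iff]
    have h1 : -‖x‖ ^ 2 / (2 * σ ^ 2) ≤ 0 := by
      rw [neg_div]
      exact neg_nonpos.mpr (by positivity)
    have h2 : (0:ℝ) ≤ 1 / (2 * σ ^ 2) := by positivity
    have h3 : (0:ℝ) ≤ (N:ℝ) / (2 * α) := by positivity
    linarith
  · intro x
    have hupos : 0 < u x := by rw [hu]; exact Real.exp_pos _
    have hlog : Real.log (u x) = -‖x‖ ^ 2 / (2 * σ ^ 2) - 1 / (2 * σ ^ 2) - N / (2 * α) := by
      rw [hu x, Real.log_exp]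
    have hlap := aux_laplacian N a b u hu' x
    rw [real_inner_self_eq_norm_sq] at hlap
    rw [hlap, hlog]
    have key : -(2 * α / σ ^ 2) * u x * (-‖x‖ ^ 2 / (2 * σ ^ 2) - 1 / (2 * σ ^ 2) - N / (2 * α))
        - (-(u x * ((2*a)^2 * ‖x‖ ^ 2 + N * (2*a))) + (1 / σ ^ 4) * ‖x‖ ^ 2 * u x)
        = u x * α * (‖x‖ ^ 2 + 1) / σ ^ 4 := by
      rw [ha]
      field_simp
      ring
    have hq : 0 ≤ u x * α * (‖x‖ ^ 2 + 1) / σ ^ 4 :=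
      div_nonneg (mul_nonneg (mul_nonneg hupos.le hα.le) (by positivity)) (by positivity)
    linarith
end

section
/- Let α = Nσ² and m = (α + √(α² + 4))/(4σ²). Then u(x) = exp(m(|x|² + 1)) is a C² solution of -Δu(x) + (1/σ⁴)|x|²u(x) = -(2α/σ²) u(x) ln u(x) on ℝ^N. -/
theorem stmt5 (N : ℕ) (hN : 1 ≤ N) (σ α m : ℝ) (hσ : 0 < σ)
    (hα : α = N * σ ^ 2)
    (hm : m = (α + Real.sqrt (α ^ 2 + 4)) / (4 * σ ^ 2))
    (u : EuclideanSpace ℝ (Fin N) → ℝ)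
    (hu : ∀ x, u x = Real.exp (m * (‖x‖ ^ 2 + 1))) :
    ContDiff ℝ 2 u ∧
      ∀ x, -laplacian u x + (1 / σ ^ 4) * ‖x‖ ^ 2 * u x
          = -(2 * α / σ ^ 2) * u x * Real.log (u x) := by
  have hue : u = fun x => Real.exp (m * (‖x‖ ^ 2 + 1)) := funext hu
  -- first derivative
  have hD1 : ∀ x : EuclideanSpace ℝ (Fin N),
      HasFDerivAt u ((u x * (2 * m)) • innerSL ℝ x) x := by
    intro x
    have h1 : HasFDerivAt (fun y : EuclideanSpace ℝ (Fin N) => m * (‖y‖ ^ 2 + 1))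
        ((2 * m) • innerSL ℝ x) x := by
      have := (((hasStrictFDerivAt_norm_sq x).hasFDerivAt).add_const 1).const_mul m
      refine this.congr_fderiv ?_
      ext y
      simp [two_smul]
      ring
    have h2 := h1.exp
    rw [hue]
    refine h2.congr_fderiv ?_
    rw [← hu x]
    ext y
    simp [mul_comm]
    rw [hu x]
    ring
  have hfd1 : ∀ (y : EuclideanSpace ℝ (Fin N)) (i : Fin N),
      fderiv ℝ u y (EuclideanSpace.single i 1) = u y * (2 * m * y i) := by
    intro y i
    rw [(hD1 y).fderiv]
    simp [real_inner_comm, EuclideanSpace.inner_single_right]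
    ring
  -- value of the laplacian
  have hlap : ∀ x, laplacian u x = u x * (4 * m ^ 2 * ‖x‖ ^ 2 + 2 * m * N) := by
    intro x
    have hnorm : ‖x‖ ^ 2 = ∑ i : Fin N, x i ^ 2 := by
      rw [EuclideanSpace.norm_eq]
      rw [Real.sq_sqrt (by positivity)]
      simp [sq_abs]
    have hterm : ∀ i : Fin N,
        fderiv ℝ (fun y => fderiv ℝ u y (EuclideanSpace.single i 1)) x
          (EuclideanSpace.single i 1) = u x * (4 * m ^ 2 * x i ^ 2 + 2 * m) := by
      intro i
      have heq : (fun y : EuclideanSpace ℝ (Fin N) =>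
          fderiv ℝ u y (EuclideanSpace.single i 1))
          = fun y => u y * (2 * m * y i) := by
        ext y; exact hfd1 y i
      rw [heq]
      have hprojD : HasFDerivAt (fun y : EuclideanSpace ℝ (Fin N) => 2 * m * y i)
          ((2 * m) • (EuclideanSpace.proj i : EuclideanSpace ℝ (Fin N) →L[ℝ] ℝ)) x :=
        ((EuclideanSpace.proj i : EuclideanSpace ℝ (Fin N) →L[ℝ] ℝ).hasFDerivAt).const_mul (2 * m)
      have hmul := (hD1 x).mul hprojD
      rw [show (fun y => u y * (2 * m * y i)) = u * fun y => 2 * m * y i from rfl, hmul.fderiv]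
      simp [real_inner_comm, EuclideanSpace.inner_single_right]
      ring
    unfold laplacian
    calc ∑ i : Fin N, fderiv ℝ (fun y => fderiv ℝ u y (EuclideanSpace.single i 1)) x
          (EuclideanSpace.single i 1)
        = ∑ i : Fin N, u x * (4 * m ^ 2 * x i ^ 2 + 2 * m) :=
          Finset.sum_congr rfl fun i _ => hterm i
      _ = u x * (4 * m ^ 2 * (∑ i : Fin N, x i ^ 2) + 2 * m * N) := by
          rw [← Finset.mul_sum]
          congr 1
          rw [Finset.sum_add_distrib, ← Finset.mul_sum, Finset.sum_const, Finset.card_univ,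
            Fintype.card_fin, nsmul_eq_mul]
          ring
      _ = u x * (4 * m ^ 2 * ‖x‖ ^ 2 + 2 * m * N) := by rw [← hnorm]
  -- key quadratic identity for m
  have hσ2 : σ ^ 2 ≠ 0 := by positivity
  have hs : Real.sqrt (α ^ 2 + 4) ^ 2 = α ^ 2 + 4 := Real.sq_sqrt (by positivity)
  have h4 : 4 * σ ^ 2 * m = α + Real.sqrt (α ^ 2 + 4) := by
    rw [hm]; field_simp
  have h5 : (4 * σ ^ 2 * m - α) ^ 2 = α ^ 2 + 4 := by rw [h4, add_sub_cancel_left]; exact hs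
  have key : 4 * m ^ 2 * σ ^ 4 = 2 * α * m * σ ^ 2 + 1 := by linear_combination h5 / 4
  constructor
  · rw [hue]
    exact Real.contDiff_exp.comp
      (contDiff_const.mul ((contDiff_norm_sq ℝ).add contDiff_const))
  · intro x
    rw [hlap x, hu x, Real.log_exp]
    have hαN : (N : ℝ) = α / σ ^ 2 := by rw [hα]; field_simp
    rw [hαN]
    set L := ‖x‖ ^ 2 with hL
    set E := Real.exp (m * (L + 1)) with hE
    field_simp
    linear_combination (-(L * E)) * key
end

section
/- Let α = Nσ² and m = (α - √(α² + 4))/(4σ²). Then u(x) = exp(m(|x|² + 1)) is a C² solution of -Δu(x) + (1/σ⁴)|x|²u(x) = -(2α/σ²) u(x) ln u(x) on ℝ^N. -/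
theorem stmt6 (N : ℕ) (hN : 1 ≤ N) (σ α m : ℝ) (hσ : 0 < σ)
    (hα : α = N * σ ^ 2)
    (hm : m = (α - Real.sqrt (α ^ 2 + 4)) / (4 * σ ^ 2))
    (u : EuclideanSpace ℝ (Fin N) → ℝ)
    (hu : ∀ x, u x = Real.exp (m * (‖x‖ ^ 2 + 1))) :
    ContDiff ℝ 2 u ∧
      ∀ x, -laplacian u x + (1 / σ ^ 4) * ‖x‖ ^ 2 * u x
          = -(2 * α / σ ^ 2) * u x * Real.log (u x) := by
  have hσ2 : (σ : ℝ) ^ 2 ≠ 0 := by positivity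
  -- algebraic identity for m
  have hs : Real.sqrt (α ^ 2 + 4) ^ 2 = α ^ 2 + 4 := Real.sq_sqrt (by positivity)
  have hm' : Real.sqrt (α ^ 2 + 4) = α - 4 * σ ^ 2 * m := by
    rw [hm]; field_simp; ring
  rw [hm'] at hs
  have key : 4 * σ ^ 4 * m ^ 2 - 2 * α * σ ^ 2 * m = 1 := by linear_combination hs / 4
  -- norm as sum of squares
  have hnorm : ∀ x : EuclideanSpace ℝ (Fin N), ‖x‖ ^ 2 = ∑ i, x i ^ 2 := by
    intro x
    rw [EuclideanSpace.norm_eq, Real.sq_sqrt (by positivity)]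
    simp [Real.norm_eq_abs, sq_abs]
  -- replace u by explicit function
  have hu' : u = fun y : EuclideanSpace ℝ (Fin N) => Real.exp (m * ((∑ i, y i ^ 2) + 1)) := by
    funext y; rw [hu y, hnorm]
  subst hu'
  set f : EuclideanSpace ℝ (Fin N) → ℝ :=
      fun y => Real.exp (m * ((∑ i, y i ^ 2) + 1)) with hf
  -- derivative of the coordinate squares sum
  have hproj : ∀ (i : Fin N) (x : EuclideanSpace ℝ (Fin N)),
      HasFDerivAt (fun y : EuclideanSpace ℝ (Fin N) => y i)
        (EuclideanSpace.proj i : EuclideanSpace ℝ (Fin N) →L[ℝ] ℝ) x :=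
    fun i x => (EuclideanSpace.proj i : EuclideanSpace ℝ (Fin N) →L[ℝ] ℝ).hasFDerivAt
  have hsq : ∀ (i : Fin N) (x : EuclideanSpace ℝ (Fin N)),
      HasFDerivAt (fun y : EuclideanSpace ℝ (Fin N) => y i ^ 2)
        ((2 * x i) • (EuclideanSpace.proj i : EuclideanSpace ℝ (Fin N) →L[ℝ] ℝ)) x := by
    intro i x
    have h2 : (2 * x i) • (EuclideanSpace.proj i : EuclideanSpace ℝ (Fin N) →L[ℝ] ℝ)
        = x i • (EuclideanSpace.proj i : EuclideanSpace ℝ (Fin N) →L[ℝ] ℝ)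
          + x i • EuclideanSpace.proj i := by module
    simp only [pow_two, h2]
    exact (hproj i x).mul (hproj i x)
  have hS : ∀ x : EuclideanSpace ℝ (Fin N),
      HasFDerivAt (fun y : EuclideanSpace ℝ (Fin N) => ∑ i, y i ^ 2)
        (∑ i, (2 * x i) • (EuclideanSpace.proj i : EuclideanSpace ℝ (Fin N) →L[ℝ] ℝ)) x := by
    intro x
    exact HasFDerivAt.fun_sum fun i _ => hsq i x
  -- derivative of f
  have hU : ∀ x : EuclideanSpace ℝ (Fin N),
      HasFDerivAt f
        ((f x * m) • ∑ i, (2 * x i) • (EuclideanSpace.proj i : EuclideanSpace ℝ (Fin N) →L[ℝ] ℝ)) x := by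
    intro x
    rw [mul_smul]
    exact (((hS x).add_const 1).const_mul m).exp
  -- first derivative evaluated on basis vectors
  have happ : ∀ (x : EuclideanSpace ℝ (Fin N)) (i : Fin N),
      fderiv ℝ f x (EuclideanSpace.single i 1) = f x * (2 * m * x i) := by
    intro x i
    rw [(hU x).fderiv]
    simp [PiLp.proj_apply, EuclideanSpace.single_apply, mul_ite, Finset.sum_ite_eq']
    ring
  -- second derivative terms
  have hsecond : ∀ (x : EuclideanSpace ℝ (Fin N)) (i : Fin N),
      fderiv ℝ (fun y => fderiv ℝ f y (EuclideanSpace.single i 1)) x (EuclideanSpace.single i 1)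
        = f x * (4 * m ^ 2 * x i ^ 2 + 2 * m) := by
    intro x i
    have hrw : (fun y => fderiv ℝ f y (EuclideanSpace.single i 1))
        = fun y => f y * (2 * m * y i) := funext fun y => happ y i
    rw [hrw]
    have hgi : HasFDerivAt (fun y : EuclideanSpace ℝ (Fin N) => f y * (2 * m * y i))
        (f x • ((2 * m) • (EuclideanSpace.proj i : EuclideanSpace ℝ (Fin N) →L[ℝ] ℝ))
          + (2 * m * x i) • ((f x * m) • ∑ j, (2 * x j) • (EuclideanSpace.proj j : EuclideanSpace ℝ (Fin N) →L[ℝ] ℝ))) x :=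
      (hU x).mul ((hproj i x).const_mul (2 * m))
    rw [hgi.fderiv]
    simp [PiLp.proj_apply, EuclideanSpace.single_apply, mul_ite, Finset.sum_ite_eq']
    ring
  constructor
  · -- smoothness
    rw [hf]
    apply (Real.contDiff_exp (n := 2)).comp
    apply ContDiff.mul contDiff_const
    apply ContDiff.add _ contDiff_const
    apply ContDiff.sum
    intro i _
    exact ((EuclideanSpace.proj i : EuclideanSpace ℝ (Fin N) →L[ℝ] ℝ).contDiff).pow 2
  · intro x
    have hlap : laplacian f x = f x * (4 * m ^ 2 * ‖x‖ ^ 2 + 2 * m * N) := by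
      unfold laplacian
      rw [Finset.sum_congr rfl fun i _ => hsecond x i, hnorm x]
      rw [Finset.sum_congr rfl fun i (_ : i ∈ Finset.univ) => mul_add (f x) (4 * m ^ 2 * x i ^ 2) (2 * m)]
      rw [Finset.sum_add_distrib, Finset.sum_const, Finset.card_univ, Fintype.card_fin]
      rw [← Finset.mul_sum]
      rw [show (∑ i, 4 * m ^ 2 * x i ^ 2) = 4 * m ^ 2 * ∑ i, x i ^ 2 from (Finset.mul_sum _ _ _).symm]
      push_cast
      ring
    rw [hlap]
    have hlog : Real.log (f x) = m * (‖x‖ ^ 2 + 1) := by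
      rw [hf, hnorm]; exact Real.log_exp _
    rw [hlog]
    have hα' : (N : ℝ) = α / σ ^ 2 := by rw [hα]; field_simp
    rw [hα']
    field_simp
    linear_combination (-(f x * ‖x‖ ^ 2)) * key
end

section
/- Let α = Nσ² and m = (α - √(α² + 4))/(4σ²). Then m < 0, and z(x) := -2σ²m(|x|² + 1) satisfies z(x) > 0 for all x ∈ ℝ^N and solves -2σ²Δz + |∇z|² + 4αz = 4|x|² on ℝ^N. -/
lemma quad_hasFDerivAt {N : ℕ} (c : ℝ) (y : EuclideanSpace ℝ (Fin N)) :
    HasFDerivAt (fun x : EuclideanSpace ℝ (Fin N) => c * (‖x‖ ^ 2 + 1))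
      ((2 * c) • innerSL ℝ y) y := by
  have h := ((hasStrictFDerivAt_norm_sq y).hasFDerivAt.add_const 1).const_mul c
  refine h.congr_fderiv ?_
  ext v
  simp [two_smul]
  ring

lemma quad_fderiv {N : ℕ} (c : ℝ) (z : EuclideanSpace ℝ (Fin N) → ℝ)
    (hz : ∀ x, z x = c * (‖x‖ ^ 2 + 1)) (y : EuclideanSpace ℝ (Fin N)) :
    fderiv ℝ z y = (2 * c) • innerSL ℝ y := by
  have : z = fun x => c * (‖x‖ ^ 2 + 1) := funext hz
  rw [this]
  exact (quad_hasFDerivAt c y).fderiv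

lemma quad_gradient {N : ℕ} (c : ℝ) (z : EuclideanSpace ℝ (Fin N) → ℝ)
    (hz : ∀ x, z x = c * (‖x‖ ^ 2 + 1)) (y : EuclideanSpace ℝ (Fin N)) :
    gradient z y = (2 * c) • y := by
  rw [gradient, quad_fderiv c z hz y]
  apply (InnerProductSpace.toDual ℝ _).symm_apply_eq.mpr
  ext v
  simp [InnerProductSpace.toDual_apply_apply, real_inner_smul_left]

lemma quad_laplacian {N : ℕ} (c : ℝ) (z : EuclideanSpace ℝ (Fin N) → ℝ)
    (hz : ∀ x, z x = c * (‖x‖ ^ 2 + 1)) (x : EuclideanSpace ℝ (Fin N)) :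
    laplacian z x = 2 * c * N := by
  unfold laplacian
  have h1 : ∀ i : Fin N,
      (fun y : EuclideanSpace ℝ (Fin N) => fderiv ℝ z y (EuclideanSpace.single i 1))
        = fun y => (2 * c) * y i := by
    intro i
    funext y
    rw [quad_fderiv c z hz y]
    simp [real_inner_comm y, EuclideanSpace.inner_single_left, EuclideanSpace.inner_single_right]
  have h2 : ∀ i : Fin N,
      fderiv ℝ (fun y : EuclideanSpace ℝ (Fin N) => fderiv ℝ z y (EuclideanSpace.single i 1)) x
        (EuclideanSpace.single i 1) = 2 * c := by
    intro i
    rw [h1 i]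
    have : HasFDerivAt (fun y : EuclideanSpace ℝ (Fin N) => (2 * c) * y i)
        ((2 * c) • (EuclideanSpace.proj (𝕜 := ℝ) i)) x := by
      simpa [smul_eq_mul] using ((EuclideanSpace.proj (𝕜 := ℝ) i).hasFDerivAt (x := x)).const_mul (2 * c)
    rw [this.fderiv]
    simp [EuclideanSpace.single_apply]
  rw [Finset.sum_congr rfl fun i _ => h2 i]
  simp [mul_comm]

theorem stmt7 (N : ℕ) (hN : 1 ≤ N) (σ α m : ℝ) (hσ : 0 < σ)
    (hα : α = N * σ ^ 2)
    (hm : m = (α - Real.sqrt (α ^ 2 + 4)) / (4 * σ ^ 2))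
    (z : EuclideanSpace ℝ (Fin N) → ℝ)
    (hz : ∀ x, z x = -2 * σ ^ 2 * m * (‖x‖ ^ 2 + 1)) :
    m < 0 ∧ (∀ x, 0 < z x) ∧
      ∀ x, -2 * σ ^ 2 * laplacian z x + ‖gradient z x‖ ^ 2 + 4 * α * z x
          = 4 * ‖x‖ ^ 2 := by
  set s := Real.sqrt (α ^ 2 + 4) with hs
  have hα0 : 0 ≤ α := by rw [hα]; positivity
  have hs2 : s ^ 2 = α ^ 2 + 4 := Real.sq_sqrt (by positivity)
  have hsα : α < s := by
    nlinarith [Real.sqrt_nonneg (α ^ 2 + 4)]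
  have hm0 : m < 0 := by
    rw [hm]
    apply div_neg_of_neg_of_pos (by linarith) (by positivity)
  set c : ℝ := -2 * σ ^ 2 * m with hc
  have hc0 : 0 < c := by
    rw [hc]; nlinarith [mul_pos (show (0:ℝ) < σ^2 by positivity) (neg_pos.mpr hm0)]
  have hcs : c = (s - α) / 2 := by
    rw [hc, hm]; field_simp; ring
  have hcq : c ^ 2 + α * c = 1 := by
    rw [hcs]; nlinarith
  have hz' : ∀ x, z x = c * (‖x‖ ^ 2 + 1) := fun x => by rw [hz x, hc]
  refine ⟨hm0, fun x => by rw [hz' x]; positivity, fun x => ?_⟩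
  rw [quad_laplacian c z hz' x, quad_gradient c z hz' x, hz' x, norm_smul]
  have hαN : α = N * σ ^ 2 := hα
  rw [mul_pow]
  have h2c : ‖(2 * c)‖ ^ 2 = 4 * c ^ 2 := by
    rw [Real.norm_eq_abs, sq_abs]; ring
  rw [h2c]
  nlinarith [sq_nonneg (‖x‖ : ℝ)]
end

section
/- Let z : ℝ^N → ℝ be a convex differentiable function satisfying 0 ≤ z(x) ≤ |x|² + 1 + C for all x ∈ ℝ^N, where C ≥ 0 is a constant. Then there exists a constant K > 0 such that |∇z(x)| ≤ K(1 + |x|) for all x ∈ ℝ^N. -/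
open Set

lemma grad_inner_le {F : Type*} [NormedAddCommGroup F] [InnerProductSpace ℝ F] [CompleteSpace F]
    (z : F → ℝ) (hconv : ConvexOn ℝ Set.univ z) (hdiff : Differentiable ℝ z)
    (x y : F) : inner ℝ (gradient z x) y ≤ z (x + y) - z x := by
  set g : ℝ → ℝ := fun t => z (x + t • y) with hg
  have hgconv : ConvexOn ℝ Set.univ g := by
    have := hconv.comp_affineMap (AffineMap.lineMap x (x + y))
    have heq : g = z ∘ (AffineMap.lineMap x (x + y)) := by
      funext t
      simp [hg, AffineMap.lineMap_apply, add_sub_cancel_left, add_comm]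
    rw [heq]
    simpa using this
  have hline : HasDerivAt (fun t : ℝ => x + t • y) y 0 := by
    simpa using ((hasDerivAt_id (0 : ℝ)).smul_const y).const_add x
  have hgd : HasDerivAt g (fderiv ℝ z x y) 0 := by
    have := (hdiff (x + (0 : ℝ) • y)).hasFDerivAt.comp_hasDerivAt 0 hline
    simp only [zero_smul, add_zero] at this
    exact this
  have hslope : fderiv ℝ z x y ≤ slope g 0 1 :=
    hgconv.le_slope_of_hasDerivAt (mem_univ _) (mem_univ _) zero_lt_one hgd
  have hsl : slope g 0 1 = z (x + y) - z x := by
    simp [hg, slope_def_field]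
  have hinner : inner ℝ (gradient z x) y = fderiv ℝ z x y := by
    have h1 : HasGradientAt z (gradient z x) x := (hdiff x).hasGradientAt
    have h2 := hasGradientAt_iff_hasFDerivAt.mp h1
    rw [h2.fderiv]
    rfl
  rw [hinner]
  linarith [hslope, hsl.symm.le]

theorem stmt11 (N : ℕ) (hN : 1 ≤ N) (C : ℝ) (hC : 0 ≤ C)
    (z : EuclideanSpace ℝ (Fin N) → ℝ)
    (hconv : ConvexOn ℝ Set.univ z) (hdiff : Differentiable ℝ z)
    (hbnd : ∀ x, 0 ≤ z x ∧ z x ≤ ‖x‖ ^ 2 + 1 + C) :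
    ∃ K > 0, ∀ x, ‖gradient z x‖ ≤ K * (1 + ‖x‖) := by
  refine ⟨5 + C, by linarith, fun x => ?_⟩
  set g := gradient z x with hgdef
  rcases eq_or_ne g 0 with h0 | h0
  · rw [h0]
    simp
    positivity
  · have hgn : (0 : ℝ) < ‖g‖ := norm_pos_iff.mpr h0
    set r : ℝ := 1 + ‖x‖ with hr
    have hrpos : (0 : ℝ) < r := by positivity
    set y := (r / ‖g‖) • g with hy
    have hinner : inner ℝ g y = r * ‖g‖ := by
      rw [hy, real_inner_smul_right, real_inner_self_eq_norm_sq]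
      field_simp
    have hkey := grad_inner_le z hconv hdiff x y
    have hny : ‖y‖ = r := by
      rw [hy, norm_smul, Real.norm_eq_abs, abs_of_pos (by positivity)]
      field_simp
    have hzb := hbnd (x + y)
    have hz0 := (hbnd x).1
    have hnb : ‖x + y‖ ≤ ‖x‖ + r := by
      calc ‖x + y‖ ≤ ‖x‖ + ‖y‖ := norm_add_le _ _
      _ = ‖x‖ + r := by rw [hny]
    have hsq : ‖x + y‖ ^ 2 ≤ (‖x‖ + r) ^ 2 := by
      apply pow_le_pow_left₀ (norm_nonneg _) hnb
    have h1 : r * ‖g‖ ≤ (‖x‖ + r) ^ 2 + 1 + C := by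
      calc r * ‖g‖ = inner ℝ g y := hinner.symm
      _ ≤ z (x + y) - z x := hkey
      _ ≤ z (x + y) := by linarith
      _ ≤ ‖x + y‖ ^ 2 + 1 + C := hzb.2
      _ ≤ (‖x‖ + r) ^ 2 + 1 + C := by linarith
    -- r = 1 + ‖x‖, show ‖g‖ ≤ (5 + C) * r
    have hs : (0 : ℝ) ≤ ‖x‖ := norm_nonneg _
    nlinarith [hr, mul_pos hrpos hgn, mul_nonneg hC (sq_nonneg ‖x‖), mul_nonneg hC hs, sq_nonneg ‖x‖]
end
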